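/- Let c : 𝔰 × 𝔰 → ℂ be a Chevalley–Eilenberg 2-cocycle for the trivial representation of 𝔰 on ℂ. Then c is a Chevalley–Eilenberg 2-coboundary if and only if c(H_j, H_k) = 0 for all 1 ≤ j ≤ r and 1 ≤ k ≤ r. In this case an explicit primitive is given by the ℝ-linear map α : 𝔰 → ℂ with α(H_j) = 0, α(v) = c(H_j, v) for v ∈ V_j, and α(E_j) = c(H_j, E_j)/2, which satisfies c(X, Y) = α([X, Y]) for all X, Y ∈ 𝔰. -/

import Mathlib

variable {r : ℕ} {𝔰 : Type} [LieRing 𝔰] [LieAlgebra ℝ 𝔰]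

/-- The `j`-th block `𝔰_j = ℝH_j ⊕ V_j ⊕ ℝE_j` of the Pyatetskii–Shapiro decomposition. -/
def psBlock (H E : Fin r → 𝔰) (V : Fin r → Submodule ℝ 𝔰) (j : Fin r) : Submodule ℝ 𝔰 :=
  Submodule.span ℝ {H j} ⊔ V j ⊔ Submodule.span ℝ {E j}

/-- The subspace `𝔰_r ⊕ … ⊕ 𝔰_{j+1}`. -/
def psUpper (H E : Fin r → 𝔰) (V : Fin r → Submodule ℝ 𝔰) (j : Fin r) : Submodule ℝ 𝔰 :=
  ⨆ k : Fin r, ⨆ _ : j < k, psBlock H E V k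

/-- `𝔰` is a Lie algebra in Pyatetskii–Shapiro normal form of rank `r`, with data
`H_j, E_j, V_j, Ω_j`. -/
structure IsPSAlgebra (H E : Fin r → 𝔰) (V : Fin r → Submodule ℝ 𝔰)
    (Ω : Fin r → 𝔰 →ₗ[ℝ] 𝔰 →ₗ[ℝ] ℝ) : Prop where
  /-- the rank is at least one -/
  rank_pos : 0 < r
  /-- as a vector space, `𝔰` is the direct sum of the blocks `𝔰_j` … -/
  total : (⨆ j, psBlock H E V j) = ⊤
  indep : iSupIndep (psBlock H E V)
  /-- … and each block is the internal direct sum `ℝH_j ⊕ V_j ⊕ ℝE_j` -/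
  inner_indep : ∀ (j : Fin r) (a b : ℝ), ∀ v ∈ V j,
    a • H j + v + b • E j = 0 → a = 0 ∧ v = 0 ∧ b = 0
  /-- `Ω_j` is antisymmetric on `V_j` … -/
  omega_anti : ∀ j, ∀ v ∈ V j, ∀ w ∈ V j, Ω j v w = - Ω j w v
  /-- … and nondegenerate on `V_j` -/
  omega_nondeg : ∀ j, ∀ v ∈ V j, (∀ w ∈ V j, Ω j v w = 0) → v = 0
  /-- `[v, E_j] = 0` for `v ∈ V_j` -/
  lie_vE : ∀ j, ∀ v ∈ V j, ⁅v, E j⁆ = 0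
  /-- `[v, v'] = Ω_j(v, v') • E_j` for `v, v' ∈ V_j` -/
  lie_vv : ∀ j, ∀ v ∈ V j, ∀ w ∈ V j, ⁅v, w⁆ = Ω j v w • E j
  /-- `[H_j, v + z•E_j] = v + 2z•E_j` -/
  lie_H : ∀ j, ∀ v ∈ V j, ∀ z : ℝ, ⁅H j, v + z • E j⁆ = v + (2 * z) • E j
  /-- `[X, H_j] = 0` for `X ∈ 𝔰_r ⊕ … ⊕ 𝔰_{j+1}` -/
  lie_upper_H : ∀ j, ∀ X ∈ psUpper H E V j, ⁅X, H j⁆ = 0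
  /-- `[X, E_j] = 0` for `X ∈ 𝔰_r ⊕ … ⊕ 𝔰_{j+1}` -/
  lie_upper_E : ∀ j, ∀ X ∈ psUpper H E V j, ⁅X, E j⁆ = 0
  /-- `[X, V_j] ⊆ V_j` for `X ∈ 𝔰_r ⊕ … ⊕ 𝔰_{j+1}` -/
  lie_upper_V : ∀ j, ∀ X ∈ psUpper H E V j, ∀ v ∈ V j, ⁅X, v⁆ ∈ V j
  /-- `ad_X ∈ 𝔰𝔭(V_j, Ω_j)` for `X ∈ 𝔰_r ⊕ … ⊕ 𝔰_{j+1}` -/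
  omega_invar : ∀ j, ∀ X ∈ psUpper H E V j, ∀ v ∈ V j, ∀ w ∈ V j,
    Ω j ⁅X, v⁆ w + Ω j v ⁅X, w⁆ = 0

/-- `c` is a Chevalley–Eilenberg 2-cocycle on `𝔰` for the trivial representation on `ℂ`. -/
def IsCE2Cocycle (c : 𝔰 →ₗ[ℝ] 𝔰 →ₗ[ℝ] ℂ) : Prop :=
  (∀ X Y : 𝔰, c X Y = - c Y X) ∧
  (∀ X Y Z : 𝔰, c ⁅X, Y⁆ Z + c ⁅Y, Z⁆ X + c ⁅Z, X⁆ Y = 0)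

/-- `c` is a Chevalley–Eilenberg 2-coboundary on `𝔰` for the trivial representation on `ℂ`. -/
def IsCE2Coboundary (c : 𝔰 →ₗ[ℝ] 𝔰 →ₗ[ℝ] ℂ) : Prop :=
  ∃ α : 𝔰 →ₗ[ℝ] ℂ, ∀ X Y : 𝔰, c X Y = α ⁅X, Y⁆

/-- A Chevalley–Eilenberg 2-cocycle `c` on `𝔰` is a 2-coboundary iff
`c(H_j, H_k) = 0` for all `j, k`; in this case the linear map `α` with `α(H_j) = 0`,
`α(v) = c(H_j, v)` for `v ∈ V_j` and `α(E_j) = c(H_j, E_j)/2` is a primitive of `c`. -/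
theorem statement10 {r : ℕ} (𝔰 : Type) [LieRing 𝔰] [LieAlgebra ℝ 𝔰] [Module.Finite ℝ 𝔰]
    (H E : Fin r → 𝔰) (V : Fin r → Submodule ℝ 𝔰) (Ω : Fin r → 𝔰 →ₗ[ℝ] 𝔰 →ₗ[ℝ] ℝ)
    (P : IsPSAlgebra H E V Ω)
    (c : 𝔰 →ₗ[ℝ] 𝔰 →ₗ[ℝ] ℂ) (hc : IsCE2Cocycle c) :
    -- `c` is a coboundary iff `c(H_j, H_k) = 0` for all `j, k` …
    (IsCE2Coboundary c ↔ ∀ j k : Fin r, c (H j) (H k) = 0) ∧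
    -- … in which case the explicitly prescribed linear map `α` is a primitive of `c`:
    ((∀ j k : Fin r, c (H j) (H k) = 0) →
      ∃ α : 𝔰 →ₗ[ℝ] ℂ,
        (∀ j, α (H j) = 0) ∧
        (∀ j, ∀ v ∈ V j, α v = c (H j) v) ∧
        (∀ j, α (E j) = c (H j) (E j) / 2) ∧
        (∀ X Y : 𝔰, c X Y = α ⁅X, Y⁆)) := by
  obtain ⟨ca, coc⟩ := hc
  classical
  -- membership facts
  have hHmem : ∀ j, H j ∈ psBlock H E V j := fun j =>
    Submodule.mem_sup_left (Submodule.mem_sup_left (Submodule.mem_span_singleton_self _))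
  have hEmem : ∀ j, E j ∈ psBlock H E V j := fun j =>
    Submodule.mem_sup_right (Submodule.mem_span_singleton_self _)
  have hVle : ∀ j, V j ≤ psBlock H E V j := fun j =>
    le_sup_of_le_left le_sup_right
  have hBU : ∀ {j k : Fin r}, j < k → psBlock H E V k ≤ psUpper H E V j := by
    intro j k hjk
    exact le_iSup_of_le k (le_iSup (fun _ : j < k => psBlock H E V k) hjk)
  -- bracket facts
  have hHv : ∀ j, ∀ v ∈ V j, ⁅H j, v⁆ = v := by
    intro j v hv
    have := P.lie_H j v hv 0
    simpa using this
  have hHE : ∀ j, ⁅H j, E j⁆ = (2:ℝ) • E j := by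
    intro j
    have := P.lie_H j 0 (V j).zero_mem 1
    simpa using this
  have hsk : ∀ X Y : 𝔰, ⁅X, Y⁆ = -⁅Y, X⁆ := fun X Y => (lie_skew X Y).symm
  have hcXX : ∀ X : 𝔰, c X X = 0 := by
    intro X
    have h := ca X X
    linear_combination h / 2
  have hHjHk : ∀ j k : Fin r, ⁅H j, H k⁆ = 0 := by
    intro j k
    rcases lt_trichotomy j k with hjk | rfl | hkj
    · rw [hsk, P.lie_upper_H j (H k) (hBU hjk (hHmem k)), neg_zero]
    · exact lie_self _
    · exact P.lie_upper_H k (H j) (hBU hkj (hHmem j))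
  -- the main construction
  have hMain : (∀ j k : Fin r, c (H j) (H k) = 0) →
      ∃ α : 𝔰 →ₗ[ℝ] ℂ,
        (∀ j, α (H j) = 0) ∧
        (∀ j, ∀ v ∈ V j, α v = c (H j) v) ∧
        (∀ j, α (E j) = c (H j) (E j) / 2) ∧
        (∀ X Y : 𝔰, c X Y = α ⁅X, Y⁆) := by
    intro h0
    -- local candidates on each block
    set αloc : Fin r → (𝔰 →ₗ[ℝ] ℂ) := fun j =>
      (c (H j)) ∘ₗ ((7/4 : ℝ) • (LieAlgebra.ad ℝ 𝔰 (H j) : 𝔰 →ₗ[ℝ] 𝔰)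
        - (3/4 : ℝ) • ((LieAlgebra.ad ℝ 𝔰 (H j) : 𝔰 →ₗ[ℝ] 𝔰) ∘ₗ
            (LieAlgebra.ad ℝ 𝔰 (H j) : 𝔰 →ₗ[ℝ] 𝔰))) with hαloc
    have hαloc_apply : ∀ j (X : 𝔰),
        αloc j X = c (H j) ((7/4 : ℝ) • ⁅H j, X⁆ - (3/4 : ℝ) • ⁅H j, ⁅H j, X⁆⁆) := by
      intro j X
      simp [hαloc, LieAlgebra.ad_apply]
    -- glue via the internal direct sum
    have hInt : DirectSum.IsInternal (psBlock H E V) :=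
      DirectSum.isInternal_submodule_of_iSupIndep_of_iSup_eq_top P.indep P.total
    have hBij : Function.Bijective (DirectSum.coeLinearMap (psBlock H E V)) := hInt
    set e := LinearEquiv.ofBijective (DirectSum.coeLinearMap (psBlock H E V)) hBij with he
    set α : 𝔰 →ₗ[ℝ] ℂ :=
      (DirectSum.toModule ℝ (Fin r) ℂ (fun j => (αloc j) ∘ₗ (psBlock H E V j).subtype)) ∘ₗ
        e.symm.toLinearMap with hαdef
    have hα_block : ∀ j, ∀ X ∈ psBlock H E V j, α X = αloc j X := by
      intro j X hX
      have h1 : e.symm X = DirectSum.lof ℝ (Fin r) (fun j => psBlock H E V j) j ⟨X, hX⟩ := by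
        rw [LinearEquiv.symm_apply_eq, he, LinearEquiv.ofBijective_apply, DirectSum.lof_eq_of,
          DirectSum.coeLinearMap_of]
      simp only [hαdef, LinearMap.comp_apply, LinearEquiv.coe_toLinearMap, h1,
        DirectSum.toModule_lof]
      rfl
    -- values of α
    have αH : ∀ j, α (H j) = 0 := by
      intro j
      rw [hα_block j _ (hHmem j), hαloc_apply]
      simp
    have αv : ∀ j, ∀ v ∈ V j, α v = c (H j) v := by
      intro j v hv
      rw [hα_block j _ (hVle j hv), hαloc_apply, hHv j v hv, hHv j v hv]
      have h74 : (7/4 : ℝ) • v - (3/4 : ℝ) • v = v := by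
        rw [← sub_smul]; norm_num
      rw [h74]
    have αE : ∀ j, α (E j) = c (H j) (E j) / 2 := by
      intro j
      rw [hα_block j _ (hEmem j), hαloc_apply, hHE j, lie_smul, hHE j]
      have h12 : (7/4 : ℝ) • ((2:ℝ) • E j) - (3/4 : ℝ) • ((2:ℝ) • (2:ℝ) • E j)
          = (1/2 : ℝ) • E j := by
        rw [smul_smul, smul_smul, smul_smul, ← sub_smul]; norm_num
      rw [h12, map_smul, Complex.real_smul]
      push_cast
      ring
    -- cocycle consequences
    have L1 : ∀ j : Fin r, ∀ X ∈ psUpper H E V j, ∀ v ∈ V j,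
        c X v = c (H j) ⁅X, v⁆ := by
      intro j X hX v hv
      have h3 := coc X (H j) v
      have e1 : c ⁅X, H j⁆ v = 0 := by rw [P.lie_upper_H j X hX]; simp
      have e2 : c ⁅H j, v⁆ X = c v X := by rw [hHv j v hv]
      have e3 : c ⁅v, X⁆ (H j) = - c ⁅X, v⁆ (H j) := by rw [hsk v X, map_neg]; simp
      have h4 := ca X v
      have h5 := ca (H j) ⁅X, v⁆
      linear_combination -h3 + e1 + e3 + h4 - h5 + e2
    have g2 : ∀ {j k : Fin r}, j < k → ∀ w ∈ V k, c w (H j) = 0 := by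
      intro j k hjk w hw
      have h3 := coc (H k) w (H j)
      have e1 : c ⁅H k, w⁆ (H j) = c w (H j) := by rw [hHv k w hw]
      have e2 : c ⁅w, H j⁆ (H k) = 0 := by
        rw [P.lie_upper_H j w (hBU hjk (hVle k hw))]; simp
      have e3 : c ⁅H j, H k⁆ w = 0 := by rw [hHjHk]; simp
      linear_combination h3 - e1 - e2 - e3
    have g3 : ∀ {j k : Fin r}, j < k → c (E k) (H j) = 0 := by
      intro j k hjk
      have h3 := coc (H k) (E k) (H j)
      have e1 : c ⁅H k, E k⁆ (H j) = (2:ℝ) • c (E k) (H j) := by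
        rw [hHE k, map_smul]; simp
      have e2 : c ⁅E k, H j⁆ (H k) = 0 := by
        rw [P.lie_upper_H j (E k) (hBU hjk (hEmem k))]; simp
      have e3 : c ⁅H j, H k⁆ (E k) = 0 := by rw [hHjHk]; simp
      rw [Complex.real_smul] at e1
      push_cast at e1
      linear_combination (h3 - e1 - e2 - e3) / 2
    have g4 : ∀ {j k : Fin r}, j < k → c (H k) (E j) = 0 := by
      intro j k hjk
      have h3 := coc (H k) (H j) (E j)
      have e1 : c ⁅H k, H j⁆ (E j) = 0 := by rw [hHjHk]; simp
      have e2 : c ⁅H j, E j⁆ (H k) = (2:ℝ) • c (E j) (H k) := by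
        rw [hHE j, map_smul]; simp
      have e3 : c ⁅E j, H k⁆ (H j) = 0 := by
        rw [hsk, P.lie_upper_E j (H k) (hBU hjk (hHmem k))]; simp
      have h4 := ca (H k) (E j)
      rw [Complex.real_smul] at e2
      push_cast at e2
      linear_combination h4 - (h3 - e1 - e2 - e3) / 2
    have g5 : ∀ {j k : Fin r}, j < k → ∀ w ∈ V k, c w (E j) = 0 := by
      intro j k hjk w hw
      have h3 := coc (H k) w (E j)
      have e1 : c ⁅H k, w⁆ (E j) = c w (E j) := by rw [hHv k w hw]
      have e2 : c ⁅w, E j⁆ (H k) = 0 := by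
        rw [P.lie_upper_E j w (hBU hjk (hVle k hw))]; simp
      have e3 : c ⁅E j, H k⁆ w = 0 := by
        rw [hsk, P.lie_upper_E j (H k) (hBU hjk (hHmem k))]; simp
      linear_combination h3 - e1 - e2 - e3
    have g6 : ∀ {j k : Fin r}, j < k → c (E k) (E j) = 0 := by
      intro j k hjk
      have h3 := coc (H k) (E k) (E j)
      have e1 : c ⁅H k, E k⁆ (E j) = (2:ℝ) • c (E k) (E j) := by
        rw [hHE k, map_smul]; simp
      have e2 : c ⁅E k, E j⁆ (H k) = 0 := by
        rw [P.lie_upper_E j (E k) (hBU hjk (hEmem k))]; simp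
      have e3 : c ⁅E j, H k⁆ (E k) = 0 := by
        rw [hsk, P.lie_upper_E j (H k) (hBU hjk (hHmem k))]; simp
      rw [Complex.real_smul] at e1
      push_cast at e1
      linear_combination (h3 - e1 - e2 - e3) / 2
    have s1 : ∀ j : Fin r, ∀ v ∈ V j, ∀ w ∈ V j,
        c v w = ((Ω j v w : ℝ) : ℂ) * c (H j) (E j) / 2 := by
      intro j v hv w hw
      have h3 := coc (H j) v w
      have e1 : c ⁅H j, v⁆ w = c v w := by rw [hHv j v hv]
      have e2 : c ⁅v, w⁆ (H j) = ((Ω j v w : ℝ) : ℂ) * c (E j) (H j) := by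
        rw [P.lie_vv j v hv w hw, map_smul]
        simp [Complex.real_smul]
      have e3 : c ⁅w, H j⁆ v = - c w v := by rw [hsk, hHv j w hw, map_neg]; simp
      have h4 := ca v w
      have h5 := ca (H j) (E j)
      linear_combination (h3 - e1 - e2 - e3) / 2 + h4 / 2 - ((Ω j v w : ℝ) : ℂ) * h5 / 2
    have s2 : ∀ j : Fin r, ∀ v ∈ V j, c v (E j) = 0 := by
      intro j v hv
      have h3 := coc (H j) v (E j)
      have e1 : c ⁅H j, v⁆ (E j) = c v (E j) := by rw [hHv j v hv]
      have e2 : c ⁅v, E j⁆ (H j) = 0 := by rw [P.lie_vE j v hv]; simp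
      have e3 : c ⁅E j, H j⁆ v = (2:ℝ) • c v (E j) := by
        rw [hsk, hHE j, map_neg, map_smul]
        simp only [LinearMap.neg_apply, LinearMap.smul_apply]
        rw [ca (E j) v]
        module
      rw [Complex.real_smul] at e3
      push_cast at e3
      linear_combination (h3 - e1 - e2 - e3) / 3
    -- zero lemmas as submodule inclusions
    have L2 : ∀ {j k : Fin r}, j < k → ∀ X ∈ psBlock H E V k, c X (H j) = 0 := by
      intro j k hjk
      suffices h : psBlock H E V k ≤ LinearMap.ker (c.flip (H j)) by
        intro X hX
        have := h hX
        rwa [LinearMap.mem_ker, LinearMap.flip_apply] at this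
      refine sup_le (sup_le ?_ ?_) ?_
      · rw [Submodule.span_le, Set.singleton_subset_iff]
        rw [SetLike.mem_coe, LinearMap.mem_ker, LinearMap.flip_apply]
        exact h0 k j
      · intro w hw
        rw [LinearMap.mem_ker, LinearMap.flip_apply]
        exact g2 hjk w hw
      · rw [Submodule.span_le, Set.singleton_subset_iff]
        rw [SetLike.mem_coe, LinearMap.mem_ker, LinearMap.flip_apply]
        exact g3 hjk
    have L3 : ∀ {j k : Fin r}, j < k → ∀ X ∈ psBlock H E V k, c X (E j) = 0 := by
      intro j k hjk
      suffices h : psBlock H E V k ≤ LinearMap.ker (c.flip (E j)) by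
        intro X hX
        have := h hX
        rwa [LinearMap.mem_ker, LinearMap.flip_apply] at this
      refine sup_le (sup_le ?_ ?_) ?_
      · rw [Submodule.span_le, Set.singleton_subset_iff]
        rw [SetLike.mem_coe, LinearMap.mem_ker, LinearMap.flip_apply]
        exact g4 hjk
      · intro w hw
        rw [LinearMap.mem_ker, LinearMap.flip_apply]
        exact g5 hjk w hw
      · rw [Submodule.span_le, Set.singleton_subset_iff]
        rw [SetLike.mem_coe, LinearMap.mem_ker, LinearMap.flip_apply]
        exact g6 hjk
    -- main identity on generators
    have Qsymm : ∀ X Y : 𝔰, c X Y = α ⁅X, Y⁆ → c Y X = α ⁅Y, X⁆ := by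
      intro X Y h
      rw [hsk Y X, map_neg, ← h]
      exact ca Y X
    set genS : Fin r → Set 𝔰 := fun j => ({H j} ∪ (V j : Set 𝔰)) ∪ {E j} with hgenS
    have hgen_sub : ∀ j, genS j ⊆ (psBlock H E V j : Set 𝔰) := by
      intro j X hX
      rcases hX with (hX | hX) | hX
      · rw [Set.mem_singleton_iff] at hX; subst hX; exact hHmem j
      · exact hVle j hX
      · rw [Set.mem_singleton_iff] at hX; subst hX; exact hEmem j
    have hspan : Submodule.span ℝ (⋃ j, genS j) = ⊤ := by
      rw [Submodule.span_iUnion, ← P.total]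
      congr 1
      funext j
      rw [hgenS]
      rw [Submodule.span_union, Submodule.span_union, Submodule.span_eq (V j)]
      rfl
    have same : ∀ j : Fin r, ∀ X ∈ genS j, ∀ Y ∈ genS j, c X Y = α ⁅X, Y⁆ := by
      intro j X hX Y hY
      have qHv : ∀ v ∈ V j, c (H j) v = α ⁅H j, v⁆ := by
        intro v hv
        rw [hHv j v hv, αv j v hv]
      have qHE : c (H j) (E j) = α ⁅H j, E j⁆ := by
        rw [hHE j, map_smul, αE j, Complex.real_smul]
        push_cast
        ring
      have qvE : ∀ v ∈ V j, c v (E j) = α ⁅v, E j⁆ := by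
        intro v hv
        rw [P.lie_vE j v hv, map_zero, s2 j v hv]
      rcases hX with (hX | hX) | hX
      · rw [Set.mem_singleton_iff] at hX; subst hX
        rcases hY with (hY | hY) | hY
        · rw [Set.mem_singleton_iff] at hY; subst hY
          rw [lie_self, map_zero, hcXX]
        · exact qHv Y hY
        · rw [Set.mem_singleton_iff] at hY; subst hY
          exact qHE
      · rcases hY with (hY | hY) | hY
        · rw [Set.mem_singleton_iff] at hY; subst hY
          exact Qsymm _ _ (qHv X hX)
        · -- X, Y ∈ V j
          rw [P.lie_vv j X hX Y hY, map_smul, αE j, Complex.real_smul, s1 j X hX Y hY]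
          ring
        · rw [Set.mem_singleton_iff] at hY; subst hY
          exact qvE X hX
      · rw [Set.mem_singleton_iff] at hX; subst hX
        rcases hY with (hY | hY) | hY
        · rw [Set.mem_singleton_iff] at hY; subst hY
          exact Qsymm _ _ qHE
        · exact Qsymm _ _ (qvE Y hY)
        · rw [Set.mem_singleton_iff] at hY; subst hY
          rw [lie_self, map_zero, hcXX]
    have cross : ∀ j k : Fin r, j < k → ∀ X ∈ genS k, ∀ Y ∈ genS j,
        c X Y = α ⁅X, Y⁆ := by
      intro j k hjk X hX Y hY
      have hXb : X ∈ psBlock H E V k := hgen_sub k hX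
      have hXu : X ∈ psUpper H E V j := hBU hjk hXb
      rcases hY with (hY | hY) | hY
      · rw [Set.mem_singleton_iff] at hY; subst hY
        rw [P.lie_upper_H j X hXu, map_zero, L2 hjk X hXb]
      · have hbr : ⁅X, Y⁆ ∈ V j := P.lie_upper_V j X hXu Y hY
        rw [αv j _ hbr]
        exact L1 j X hXu Y hY
      · rw [Set.mem_singleton_iff] at hY; subst hY
        rw [P.lie_upper_E j X hXu, map_zero, L3 hjk X hXb]
    have key : ∀ X Y : 𝔰, c X Y = α ⁅X, Y⁆ := by
      have hβ : ∃ β : 𝔰 →ₗ[ℝ] 𝔰 →ₗ[ℝ] ℂ, ∀ X Y : 𝔰, β X Y = α ⁅X, Y⁆ := by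
        refine ⟨LinearMap.mk₂ ℝ (fun X Y => α ⁅X, Y⁆) ?_ ?_ ?_ ?_, fun X Y => rfl⟩
        · intro X X' Y
          show α ⁅X + X', Y⁆ = α ⁅X, Y⁆ + α ⁅X', Y⁆
          rw [add_lie, map_add]
        · intro a X Y
          show α ⁅a • X, Y⁆ = a • α ⁅X, Y⁆
          rw [smul_lie, map_smul]
        · intro X Y Y'
          show α ⁅X, Y + Y'⁆ = α ⁅X, Y⁆ + α ⁅X, Y'⁆
          rw [lie_add, map_add]
        · intro a X Y
          show α ⁅X, a • Y⁆ = a • α ⁅X, Y⁆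
          rw [lie_smul, map_smul]
      obtain ⟨β, hβeq⟩ := hβ
      have : c = β := by
        apply LinearMap.ext_on hspan
        intro X hX
        obtain ⟨j, hj⟩ := Set.mem_iUnion.mp hX
        apply LinearMap.ext_on hspan
        intro Y hY
        obtain ⟨k, hk⟩ := Set.mem_iUnion.mp hY
        rw [hβeq]
        rcases lt_trichotomy j k with hjk | rfl | hkj
        · exact Qsymm _ _ (cross j k hjk Y hk X hj)
        · exact same j X hj Y hk
        · exact cross k j hkj X hj Y hk
      intro X Y
      rw [this, hβeq]
    exact ⟨α, αH, αv, αE, key⟩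
  refine ⟨⟨?_, fun h0 => ?_⟩, hMain⟩
  · rintro ⟨α, hα⟩ j k
    rw [hα, hHjHk, map_zero]
  · obtain ⟨α, _, _, _, hk⟩ := hMain h0
    exact ⟨α, hk⟩
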